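/- Let P be a poset on a countable (finite or countably infinite) carrier set that satisfies the descending chain condition (every descending sequence eventually stabilizes, i.e. the strict order is well-founded) and contains no infinite antichain. Then the collection of all downsets of P is countable. -/
import Mathlib


/-- A poset on a countable carrier set that satisfies the descending chain condition
(the strict order is well-founded) and contains no infinite antichain has only
countably many downsets (lower sets). -/
theorem countable_downsets_of_dcc_no_infinite_antichain
    {P : Type*} [PartialOrder P] [Countable P]
    (hDCC : WellFounded ((· < ·) : P → P → Prop))
    (hAC : ∀ S : Set P, IsAntichain (· ≤ ·) S → S.Finite) :
    {X : Set P | IsLowerSet X}.Countable := by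
  rw [← Set.countable_coe_iff]
  -- map each lower set to the set of minimal elements of its complement
  set F : Set P → Set P := fun X => {m | m ∈ Xᶜ ∧ ∀ z ∈ Xᶜ, ¬ z < m} with hF
  -- each F X is an antichain, hence finite
  have hanti : ∀ X : Set P, IsAntichain (· ≤ ·) (F X) := by
    intro X a ha b hb hne hab
    exact hb.2 a ha.1 (lt_of_le_of_ne hab hne)
  have hfin : ∀ X : Set P, (F X).Finite := fun X => hAC _ (hanti X)
  -- key: for a lower set X, the complement is the upper closure of F X
  have hkey : ∀ X : Set P, IsLowerSet X → Xᶜ = {y | ∃ m ∈ F X, m ≤ y} := by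
    intro X hX
    ext y
    constructor
    · intro hy
      obtain ⟨m, ⟨hm, hmy⟩, hmin⟩ :=
        hDCC.has_min {z | z ∈ Xᶜ ∧ z ≤ y} ⟨y, hy, le_refl y⟩
      refine ⟨m, ⟨hm, fun z hz hzm => hmin z ⟨hz, hzm.le.trans hmy⟩ hzm⟩, hmy⟩
    · rintro ⟨m, ⟨hm, -⟩, hmy⟩ hyX
      exact hm (hX hmy hyX)
  -- injectivity into Finset P
  refine Function.Injective.countable
    (f := fun X : {X : Set P | IsLowerSet X} => (hfin X.1).toFinset) ?_
  rintro ⟨X, hX⟩ ⟨Y, hY⟩ h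
  simp only [Set.Finite.toFinset_inj] at h
  have : Xᶜ = Yᶜ := by rw [hkey X hX, hkey Y hY, h]
  exact Subtype.ext (compl_injective this)
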